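/- Let f : ℝ → ℝ be six times continuously differentiable and fix x ∈ ℝ. Then the Numerov local truncation error h ↦ f(x+h) − 2·f(x) + f(x−h) − (h²/12)·( f''(x+h) + 10·f''(x) + f''(x−h) ) is O(h⁶) as h → 0. -/

import Mathlib

open Asymptotics

open Set Filter Topology


private lemma myIteratedDeriv_add {n : ℕ} {f g : ℝ → ℝ} (x : ℝ) (hf : ContDiff ℝ n f)
    (hg : ContDiff ℝ n g) :
    iteratedDeriv n (fun z => f z + g z) x = iteratedDeriv n f x + iteratedDeriv n g x := by
  simp only [← iteratedDerivWithin_univ]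
  exact iteratedDerivWithin_add (mem_univ x) uniqueDiffOn_univ hf.contDiffWithinAt hg.contDiffWithinAt

private lemma myIteratedDeriv_sub {n : ℕ} {f g : ℝ → ℝ} (x : ℝ) (hf : ContDiff ℝ n f)
    (hg : ContDiff ℝ n g) :
    iteratedDeriv n (fun z => f z - g z) x = iteratedDeriv n f x - iteratedDeriv n g x := by
  simp only [← iteratedDerivWithin_univ]
  exact iteratedDerivWithin_sub (mem_univ x) uniqueDiffOn_univ hf.contDiffWithinAt hg.contDiffWithinAt

private lemma myIteratedDeriv_const_mul {n : ℕ} {f : ℝ → ℝ} (x : ℝ) (c : ℝ)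
    (hf : ContDiff ℝ n f) :
    iteratedDeriv n (fun z => c * f z) x = c * iteratedDeriv n f x := by
  simp only [← iteratedDerivWithin_univ]
  exact iteratedDerivWithin_const_mul (mem_univ x) uniqueDiffOn_univ c hf.contDiffWithinAt

private lemma myIteratedDeriv_const_add {n : ℕ} (hn : 0 < n) {f : ℝ → ℝ} (x : ℝ) (c : ℝ) :
    iteratedDeriv n (fun z => c + f z) x = iteratedDeriv n f x := by
  simp only [← iteratedDerivWithin_univ]
  exact iteratedDerivWithin_const_add hn c

private lemma myIteratedDeriv_pow (m : ℕ) :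
    ∀ k : ℕ, iteratedDeriv k (fun y : ℝ => y ^ m) =
      fun y => (m.descFactorial k : ℝ) * y ^ (m - k) := by
  intro k
  induction k with
  | zero => simp
  | succ k ih =>
    funext y
    rw [iteratedDeriv_succ, ih]
    have : deriv (fun y : ℝ => (m.descFactorial k : ℝ) * y ^ (m - k)) y
        = (m.descFactorial k : ℝ) * ((m - k : ℕ) * y ^ (m - k - 1)) := by
      rw [deriv_const_mul _ (differentiableAt_pow _), deriv_pow_field]
    rw [this, Nat.descFactorial_succ, Nat.cast_mul, Nat.sub_sub]
    ring

private lemma poly_itd (k : ℕ) (hk : 0 < k) (a b c : ℝ) :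
    iteratedDeriv k (fun h : ℝ => a + b * h ^ 2 + c * h ^ 4) 0
      = b * ((Nat.descFactorial 2 k : ℝ) * (0:ℝ) ^ (2 - k))
        + c * ((Nat.descFactorial 4 k : ℝ) * (0:ℝ) ^ (4 - k)) := by
  have e0 : iteratedDeriv k (fun h : ℝ => a + b * h ^ 2 + c * h ^ 4) 0
      = iteratedDeriv k (fun h : ℝ => a + (b * h ^ 2 + c * h ^ 4)) 0 := by
    congr 1; funext h; ring
  have e1 : iteratedDeriv k (fun h : ℝ => a + (b * h ^ 2 + c * h ^ 4)) 0
      = iteratedDeriv k (fun h : ℝ => b * h ^ 2 + c * h ^ 4) 0 :=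
    myIteratedDeriv_const_add hk 0 a
  have e2 : iteratedDeriv k (fun h : ℝ => b * h ^ 2 + c * h ^ 4) 0
      = iteratedDeriv k (fun h : ℝ => b * h ^ 2) 0 + iteratedDeriv k (fun h : ℝ => c * h ^ 4) 0 :=
    myIteratedDeriv_add 0 (by fun_prop) (by fun_prop)
  have e3 : iteratedDeriv k (fun h : ℝ => b * h ^ 2) 0
      = b * iteratedDeriv k (fun h : ℝ => h ^ 2) 0 :=
    myIteratedDeriv_const_mul 0 b (by fun_prop)
  have e4 : iteratedDeriv k (fun h : ℝ => c * h ^ 4) 0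
      = c * iteratedDeriv k (fun h : ℝ => h ^ 4) 0 :=
    myIteratedDeriv_const_mul 0 c (by fun_prop)
  rw [e0, e1, e2, e3, e4, myIteratedDeriv_pow 2 k, myIteratedDeriv_pow 4 k]


private lemma myIDW {g : ℝ → ℝ} {n : ℕ} (hg : ContDiff ℝ n g) {k : ℕ} (hk : k ≤ n) :
    iteratedDerivWithin k g (Icc (0:ℝ) 1) 0 = iteratedDeriv k g 0 := by
  have h : HasFTaylorSeriesUpTo (n : ℕ∞) g (ftaylorSeries ℝ g) :=
    contDiff_iff_ftaylorSeries.mp (by exact_mod_cast hg)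
  have h' := (h.hasFTaylorSeriesUpToOn (Icc (0:ℝ) 1)).eq_iteratedFDerivWithin_of_uniqueDiffOn
    (by exact_mod_cast hk) (uniqueDiffOn_Icc one_pos) (by norm_num : (0:ℝ) ∈ Icc (0:ℝ) 1)
  rw [iteratedDerivWithin_eq_iteratedFDerivWithin, iteratedDeriv_eq_iteratedFDeriv, ← h']
  rfl

private lemma keyRight (n : ℕ) (g : ℝ → ℝ) (hg : ContDiff ℝ (n + 1) g)
    (h0 : ∀ k ≤ n, iteratedDeriv k g 0 = 0) :
    ∃ C, ∀ h ∈ Icc (0:ℝ) 1, |g h| ≤ C * h ^ (n + 1) := by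
  obtain ⟨C, hC⟩ := exists_taylor_mean_remainder_bound (n := n) (a := 0) (b := 1)
    zero_le_one hg.contDiffOn
  refine ⟨C, fun h hh => ?_⟩
  have ht : taylorWithinEval g n (Icc (0:ℝ) 1) 0 h = 0 := by
    rw [taylor_within_apply]
    apply Finset.sum_eq_zero
    intro k hk
    rw [myIDW (hg.of_le (by exact_mod_cast Nat.le_succ n)) (Finset.mem_range_succ_iff.mp hk),
      h0 k (Finset.mem_range_succ_iff.mp hk)]
    simp
  have := hC h hh
  rw [ht] at this
  simpa using this

private lemma key (n : ℕ) (g : ℝ → ℝ) (hg : ContDiff ℝ (n + 1) g)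
    (h0 : ∀ k ≤ n, iteratedDeriv k g 0 = 0) :
    g =O[𝓝 (0:ℝ)] fun h => h ^ (n + 1) := by
  obtain ⟨C, hC⟩ := keyRight n g hg h0
  obtain ⟨D, hD⟩ := keyRight n (fun h => g (-h))
    (hg.comp contDiff_neg)
    (by
      intro k hk
      rw [iteratedDeriv_comp_neg, neg_zero, h0 k hk, smul_zero])
  rw [isBigO_iff]
  refine ⟨|C| + |D|, ?_⟩
  filter_upwards [show Icc (-1:ℝ) 1 ∈ 𝓝 (0:ℝ) from
    Icc_mem_nhds (by norm_num) (by norm_num)] with h hh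
  rcases le_or_gt 0 h with hpos | hneg
  · have := hC h ⟨hpos, hh.2⟩
    rw [Real.norm_eq_abs, Real.norm_eq_abs]
    calc |g h| ≤ C * h ^ (n+1) := this
      _ ≤ |C| * |h ^ (n+1)| := by
          rw [← abs_mul]; exact le_abs_self _
      _ ≤ (|C| + |D|) * |h ^ (n+1)| := by
          have := abs_nonneg D
          nlinarith [abs_nonneg (h ^ (n+1))]
  · have := hD (-h) ⟨by linarith, by linarith [hh.1]⟩
    rw [neg_neg] at this
    rw [Real.norm_eq_abs, Real.norm_eq_abs]
    calc |g h| ≤ D * (-h) ^ (n+1) := this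
      _ ≤ |D| * |(-h) ^ (n+1)| := by
          rw [← abs_mul]; exact le_abs_self _
      _ = |D| * |h ^ (n+1)| := by
          rw [abs_pow, abs_pow, abs_neg]
      _ ≤ (|C| + |D|) * |h ^ (n+1)| := by
          have := abs_nonneg C
          nlinarith [abs_nonneg (h ^ (n+1))]

private lemma itd_comp_sub (f : ℝ → ℝ) (x : ℝ) (k : ℕ) :
    iteratedDeriv k (fun h : ℝ => f (x - h)) 0 = (-1:ℝ) ^ k * iteratedDeriv k f x := by
  have h1 := iteratedDeriv_comp_neg k (fun z => f (x + z)) 0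
  have h2 := iteratedDeriv_comp_const_add k f x
  simp only [sub_eq_add_neg]
  rw [h1, neg_zero, h2]
  simp

private lemma itd_comp_add (f : ℝ → ℝ) (x : ℝ) (k : ℕ) :
    iteratedDeriv k (fun h : ℝ => f (x + h)) 0 = iteratedDeriv k f x := by
  rw [iteratedDeriv_comp_const_add]
  simp

private lemma lemA (f : ℝ → ℝ) (hf : ContDiff ℝ ((6:ℕ) : WithTop ℕ∞) f) (x : ℝ) :
    (fun h : ℝ => f (x + h) + f (x - h)
        - (2 * f x + iteratedDeriv 2 f x * h ^ 2 + iteratedDeriv 4 f x / 12 * h ^ 4))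
      =O[𝓝 (0:ℝ)] fun h : ℝ => h ^ 6 := by
  have hfp : ContDiff ℝ ((6:ℕ) : WithTop ℕ∞) (fun h : ℝ => f (x + h)) :=
    hf.comp (contDiff_const.add contDiff_id)
  have hfm : ContDiff ℝ ((6:ℕ) : WithTop ℕ∞) (fun h : ℝ => f (x - h)) :=
    hf.comp (contDiff_const.sub contDiff_id)
  have vanish : ∀ k ≤ 5, iteratedDeriv k
      (fun h : ℝ => f (x + h) + f (x - h)
        - (2 * f x + iteratedDeriv 2 f x * h ^ 2 + iteratedDeriv 4 f x / 12 * h ^ 4)) 0 = 0 := by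
    intro k hk
    have hk6 : (k : WithTop ℕ∞) ≤ ((6:ℕ) : WithTop ℕ∞) := by
      exact_mod_cast (show k ≤ 6 by omega)
    have e1 : iteratedDeriv k
        (fun h : ℝ => f (x + h) + f (x - h)
          - (2 * f x + iteratedDeriv 2 f x * h ^ 2 + iteratedDeriv 4 f x / 12 * h ^ 4)) 0
        = iteratedDeriv k (fun h : ℝ => f (x + h) + f (x - h)) 0
          - iteratedDeriv k (fun h : ℝ =>
              2 * f x + iteratedDeriv 2 f x * h ^ 2 + iteratedDeriv 4 f x / 12 * h ^ 4) 0 :=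
      myIteratedDeriv_sub 0 ((hfp.add hfm).of_le hk6) (by fun_prop)
    have e2 : iteratedDeriv k (fun h : ℝ => f (x + h) + f (x - h)) 0
        = iteratedDeriv k (fun h : ℝ => f (x + h)) 0
          + iteratedDeriv k (fun h : ℝ => f (x - h)) 0 :=
      myIteratedDeriv_add 0 (hfp.of_le hk6) (hfm.of_le hk6)
    rw [e1, e2, itd_comp_add, itd_comp_sub]
    interval_cases k
    · simp; ring
    · rw [poly_itd 1 (by norm_num)]; norm_num
    · rw [poly_itd 2 (by norm_num)]; norm_num [Nat.descFactorial]; ring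
    · rw [poly_itd 3 (by norm_num)]; norm_num [Nat.descFactorial]
    · rw [poly_itd 4 (by norm_num)]; norm_num [Nat.descFactorial]; ring
    · rw [poly_itd 5 (by norm_num)]; norm_num [Nat.descFactorial]
  have hA6 : ContDiff ℝ ((6:ℕ) : WithTop ℕ∞)
      (fun h : ℝ => f (x + h) + f (x - h)
        - (2 * f x + iteratedDeriv 2 f x * h ^ 2 + iteratedDeriv 4 f x / 12 * h ^ 4)) :=
    (hfp.add hfm).sub (by fun_prop)
  exact key 5 _ (by exact_mod_cast hA6) vanish

private lemma lemB (g : ℝ → ℝ) (hg : ContDiff ℝ ((4:ℕ) : WithTop ℕ∞) g) (x : ℝ) :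
    (fun h : ℝ => g (x + h) + g (x - h)
        - (2 * g x + iteratedDeriv 2 g x * h ^ 2 + 0 * h ^ 4))
      =O[𝓝 (0:ℝ)] fun h : ℝ => h ^ 4 := by
  have hgp : ContDiff ℝ ((4:ℕ) : WithTop ℕ∞) (fun h : ℝ => g (x + h)) :=
    hg.comp (contDiff_const.add contDiff_id)
  have hgm : ContDiff ℝ ((4:ℕ) : WithTop ℕ∞) (fun h : ℝ => g (x - h)) :=
    hg.comp (contDiff_const.sub contDiff_id)
  have vanish : ∀ k ≤ 3, iteratedDeriv k
      (fun h : ℝ => g (x + h) + g (x - h)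
        - (2 * g x + iteratedDeriv 2 g x * h ^ 2 + 0 * h ^ 4)) 0 = 0 := by
    intro k hk
    have hk4 : (k : WithTop ℕ∞) ≤ ((4:ℕ) : WithTop ℕ∞) := by
      exact_mod_cast (show k ≤ 4 by omega)
    have e1 : iteratedDeriv k
        (fun h : ℝ => g (x + h) + g (x - h)
          - (2 * g x + iteratedDeriv 2 g x * h ^ 2 + 0 * h ^ 4)) 0
        = iteratedDeriv k (fun h : ℝ => g (x + h) + g (x - h)) 0
          - iteratedDeriv k (fun h : ℝ =>
              2 * g x + iteratedDeriv 2 g x * h ^ 2 + 0 * h ^ 4) 0 :=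
      myIteratedDeriv_sub 0 ((hgp.add hgm).of_le hk4) (by fun_prop)
    have e2 : iteratedDeriv k (fun h : ℝ => g (x + h) + g (x - h)) 0
        = iteratedDeriv k (fun h : ℝ => g (x + h)) 0
          + iteratedDeriv k (fun h : ℝ => g (x - h)) 0 :=
      myIteratedDeriv_add 0 (hgp.of_le hk4) (hgm.of_le hk4)
    rw [e1, e2, itd_comp_add, itd_comp_sub]
    interval_cases k
    · simp; ring
    · rw [poly_itd 1 (by norm_num)]; norm_num
    · rw [poly_itd 2 (by norm_num)]; norm_num [Nat.descFactorial]; ring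
    · rw [poly_itd 3 (by norm_num)]; norm_num [Nat.descFactorial]
  have hB4 : ContDiff ℝ ((4:ℕ) : WithTop ℕ∞)
      (fun h : ℝ => g (x + h) + g (x - h)
        - (2 * g x + iteratedDeriv 2 g x * h ^ 2 + 0 * h ^ 4)) :=
    (hgp.add hgm).sub (by fun_prop)
  exact key 3 _ (by exact_mod_cast hB4) vanish

/-- For f : ℝ → ℝ six times continuously differentiable and fixed
x ∈ ℝ, the Numerov local truncation error
h ↦ f(x+h) − 2f(x) + f(x−h) − (h²/12)(f′′(x+h) + 10f′′(x) + f′′(x−h))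
is O(h⁶) as h → 0. -/
theorem numerov_local_truncation_error (f : ℝ → ℝ) (hf : ContDiff ℝ 6 f) (x : ℝ) :
    (fun h : ℝ =>
        f (x + h) - 2 * f x + f (x - h)
          - (h ^ 2 / 12) * (deriv (deriv f) (x + h) + 10 * deriv (deriv f) x
              + deriv (deriv f) (x - h)))
      =O[nhds (0 : ℝ)] (fun h : ℝ => h ^ 6) := by
  have hgdef : deriv (deriv f) = iteratedDeriv 2 f := by
    simp [iteratedDeriv_succ, iteratedDeriv_zero]
  have hg4 : ContDiff ℝ ((4:ℕ) : WithTop ℕ∞) (deriv (deriv f)) := by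
    have h6 : ContDiff ℝ ((4 + 2 : ℕ) : WithTop ℕ∞) f := by exact_mod_cast hf
    have h := ContDiff.iterate_deriv' 4 2 h6
    have e : deriv^[2] f = deriv (deriv f) := rfl
    rwa [e] at h
  have hg2 : iteratedDeriv 2 (deriv (deriv f)) x = iteratedDeriv 4 f x := by
    simp [iteratedDeriv_succ', iteratedDeriv_succ, iteratedDeriv_zero]
  have hgx : deriv (deriv f) x = iteratedDeriv 2 f x := congrFun hgdef x
  have OA := lemA f (by exact_mod_cast hf) x
  have OB := lemB (deriv (deriv f)) hg4 x
  have O2 : (fun h : ℝ => h ^ 2 / 12) =O[𝓝 (0:ℝ)] fun h : ℝ => h ^ 2 := by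
    have e : (fun h : ℝ => h ^ 2 / 12) = fun h : ℝ => (1/12) * h ^ 2 := by funext h; ring
    rw [e]
    exact (isBigO_refl (fun h : ℝ => h ^ 2) _).const_mul_left _
  have prod := O2.mul OB
  have e : (fun h : ℝ => h ^ 2 * h ^ 4) = fun h : ℝ => h ^ 6 := by funext h; ring
  rw [e] at prod
  have final := OA.sub prod
  have eqfun : (fun h : ℝ =>
        f (x + h) - 2 * f x + f (x - h)
          - (h ^ 2 / 12) * (deriv (deriv f) (x + h) + 10 * deriv (deriv f) x
              + deriv (deriv f) (x - h)))
      = fun h : ℝ =>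
        (f (x + h) + f (x - h)
          - (2 * f x + iteratedDeriv 2 f x * h ^ 2 + iteratedDeriv 4 f x / 12 * h ^ 4))
        - h ^ 2 / 12 * (deriv (deriv f) (x + h) + deriv (deriv f) (x - h)
          - (2 * deriv (deriv f) x + iteratedDeriv 2 (deriv (deriv f)) x * h ^ 2 + 0 * h ^ 4)) := by
    funext h
    rw [hg2, hgx]
    ring
  rw [eqfun]
  exact final
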